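/- Let n ≥ 2, let α₁,…,αₙ > 0 be real, let β₁, β₂ > 0, and for z, w ∈ D^n set L^{(α)}(z,w) := ∏_{j=1}^n (1 − z_j w_j)^{−α_j} (principal branch); write α + 2e_i for α with α_i replaced by α_i + 2. Let N(z,w) ∈ M₃(ℂ) be the matrix with entries N₁₁ = L^{(α+2e₂)}, N₁₂ = 0, N₁₃ = α₁⁻¹∂_{w₁}L^{(α+2e₂)}, N₂₁ = 0, N₂₂ = β₁²·L^{(α+2e₁)}, N₂₃ = β₁²α₂⁻¹∂_{w₂}L^{(α+2e₁)}, N₃₁ = α₁⁻¹∂_{z₁}L^{(α+2e₂)}, N₃₂ = β₁²α₂⁻¹∂_{z₂}L^{(α+2e₁)}, N₃₃ = α₁⁻²∂_{z₁}∂_{w₁}L^{(α+2e₂)} + β₁²α₂⁻²∂_{z₂}∂_{w₂}L^{(α+2e₁)} + β₂²·L^{(α+2e₁+2e₂)}. Then for all z, w ∈ D^n, N(z,w) = D₂(z,w) · B(z,w) · D₂(z,w) · ∏_{j=1}^n (1 − z_j w_j)^{−α_j − 2δ_{1j} − 2δ_{2j}}, where D₂(z,w) = diag(1−z₁w₁,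 1−z₂w₂, 1), B(z,w) is the matrix with rows (1, 0, z₁), (0, β₁², β₁²z₂), (w₁, β₁²w₂, z₁w₁ + β₁²z₂w₂ + 1/α₁ + β₁²/α₂ + β₂²), and δ is the Kronecker delta. -/

import Mathlib

open Matrix

/-- Complex partial derivative in the `i`-th coordinate of the first variable. -/
noncomputable def pdz {n : ℕ} (f : (Fin n → ℂ) → (Fin n → ℂ) → ℂ) (i : Fin n) :
    (Fin n → ℂ) → (Fin n → ℂ) → ℂ :=
  fun z w => fderiv ℂ (fun z' => f z' w) z (Pi.single i 1)

/-- Complex partial derivative in the `j`-th coordinate of the second variable. -/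
noncomputable def pdw {n : ℕ} (f : (Fin n → ℂ) → (Fin n → ℂ) → ℂ) (j : Fin n) :
    (Fin n → ℂ) → (Fin n → ℂ) → ℂ :=
  fun z w => fderiv ℂ (fun w' => f z w') w (Pi.single j 1)

/-- The sesquiholomorphic scalar kernel `L^{(α)}(z,w) = ∏ⱼ (1 − zⱼwⱼ)^{−αⱼ}`
(principal branch). -/
noncomputable def Lker {n : ℕ} (a : Fin n → ℝ) (z w : Fin n → ℂ) : ℂ :=
  ∏ j, (1 - z j * w j) ^ (-(a j : ℂ))

lemma slit_aux {ζ : ℂ} (h : ‖ζ‖ < 1) : (1 - ζ) ∈ Complex.slitPlane := by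
  have := Complex.mem_slitPlane_of_norm_lt_one (z := -ζ) (by simpa using h)
  simpa [sub_eq_add_neg] using this

lemma ne_aux {ζ : ℂ} (h : ‖ζ‖ < 1) : (1 - ζ) ≠ 0 :=
  Complex.slitPlane_ne_zero (slit_aux h)

lemma hasFDerivAt_Lker {n : ℕ} (a : Fin n → ℝ) (w z : Fin n → ℂ)
    (h : ∀ k, ‖z k * w k‖ < 1) :
    HasFDerivAt (fun z' => Lker a z' w)
      (∑ i, (((a i : ℂ)) * w i * (1 - z i * w i)⁻¹ * Lker a z w) •
        (ContinuousLinearMap.proj i : (Fin n → ℂ) →L[ℂ] ℂ)) z := by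
  classical
  have hg : ∀ i ∈ Finset.univ, HasFDerivAt
      (fun z' : Fin n → ℂ => (1 - z' i * w i) ^ (-(a i : ℂ)))
      (((-(a i : ℂ)) * (1 - z i * w i) ^ (-(a i : ℂ) - 1) * (-(w i))) •
        (ContinuousLinearMap.proj i : (Fin n → ℂ) →L[ℂ] ℂ)) z := by
    intro i _
    have hu : HasDerivAt (fun t : ℂ => 1 - t * w i) (-(w i)) (z i) := by
      simpa using (hasDerivAt_mul_const (w i)).const_sub (1 : ℂ)
    have h1 := hu.cpow_const (c := -(a i : ℂ)) (slit_aux (h i))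
    exact h1.comp_hasFDerivAt z (hasFDerivAt_apply (𝕜 := ℂ) i z)
  have h2 := HasFDerivAt.finset_prod hg
  have h3 : (∑ i ∈ Finset.univ,
      (∏ j ∈ Finset.univ.erase i, (1 - z j * w j) ^ (-(a j : ℂ))) •
        (((-(a i : ℂ)) * (1 - z i * w i) ^ (-(a i : ℂ) - 1) * (-(w i))) •
          (ContinuousLinearMap.proj i : (Fin n → ℂ) →L[ℂ] ℂ)))
      = ∑ i, (((a i : ℂ)) * w i * (1 - z i * w i)⁻¹ * Lker a z w) •
        (ContinuousLinearMap.proj i : (Fin n → ℂ) →L[ℂ] ℂ) := by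
    refine Finset.sum_congr rfl fun i _ => ?_
    rw [smul_smul]
    congr 1
    rw [Complex.cpow_sub _ _ (ne_aux (h i)), Complex.cpow_one, Lker,
      ← Finset.mul_prod_erase _ _ (Finset.mem_univ i)]
    field_simp
  exact h3 ▸ h2

lemma pdz_Lker {n : ℕ} (a : Fin n → ℝ) (i : Fin n) (z w : Fin n → ℂ)
    (h : ∀ k, ‖z k * w k‖ < 1) :
    pdz (Lker a) i z w = (a i : ℂ) * w i * (1 - z i * w i)⁻¹ * Lker a z w := by
  classical
  rw [pdz, (hasFDerivAt_Lker a w z h).fderiv]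
  simp [ContinuousLinearMap.sum_apply, ContinuousLinearMap.proj_apply,
    Pi.single_apply, mul_ite, mul_one, mul_zero, Finset.sum_ite_eq', Finset.sum_ite_eq]

lemma Lker_symm {n : ℕ} (a : Fin n → ℝ) (z w : Fin n → ℂ) : Lker a z w = Lker a w z := by
  unfold Lker
  exact Finset.prod_congr rfl fun j _ => by rw [mul_comm]

lemma pdw_Lker {n : ℕ} (a : Fin n → ℝ) (i : Fin n) (z w : Fin n → ℂ)
    (h : ∀ k, ‖z k * w k‖ < 1) :
    pdw (Lker a) i z w = (a i : ℂ) * z i * (1 - z i * w i)⁻¹ * Lker a z w := by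
  have h' : ∀ k, ‖w k * z k‖ < 1 := fun k => by rw [mul_comm]; exact h k
  have e : pdw (Lker a) i z w = pdz (Lker a) i w z := by
    have e2 : (fun w' => Lker a z w') = (fun w' => Lker a w' z) :=
      funext fun w' => Lker_symm a z w'
    show fderiv ℂ (fun w' => Lker a z w') w (Pi.single i 1) = _
    rw [e2]
    rfl
  rw [e, pdz_Lker a i w z h', mul_comm (w i) (z i), ← Lker_symm]

lemma pdz_pdw_Lker {n : ℕ} (a : Fin n → ℝ) (i : Fin n) (z w : Fin n → ℂ)
    (h : ∀ k, ‖z k * w k‖ < 1) :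
    pdz (pdw (Lker a) i) i z w =
      (a i : ℂ) * (1 + (a i : ℂ) * z i * w i) * ((1 - z i * w i)⁻¹ * (1 - z i * w i)⁻¹) *
        Lker a z w := by
  classical
  have hSopen : IsOpen {z' : Fin n → ℂ | ∀ k, ‖z' k * w k‖ < 1} := by
    have e : {z' : Fin n → ℂ | ∀ k, ‖z' k * w k‖ < 1} =
        ⋂ k, {z' : Fin n → ℂ | ‖z' k * w k‖ < 1} := by
      ext z'; simp [Set.mem_iInter]
    rw [e]
    refine isOpen_iInter_of_finite fun k => ?_
    exact isOpen_lt (continuous_norm.comp ((continuous_apply k).mul continuous_const))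
      continuous_const
  have hmem : {z' : Fin n → ℂ | ∀ k, ‖z' k * w k‖ < 1} ∈ nhds z :=
    hSopen.mem_nhds h
  have hEq : (fun z' => pdw (Lker a) i z' w) =ᶠ[nhds z]
      (fun z' => (a i : ℂ) * z' i * (1 - z' i * w i)⁻¹ * Lker a z' w) :=
    Filter.eventuallyEq_of_mem hmem fun z' hz' => pdw_Lker a i z' w hz'
  have hf1 : HasDerivAt (fun t : ℂ => (a i : ℂ) * t * (1 - t * w i)⁻¹)
      (((a i : ℂ) * 1) * (1 - z i * w i)⁻¹ +
        ((a i : ℂ) * z i) * (-(-(w i)) / (1 - z i * w i) ^ 2)) (z i) := by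
    have hA : HasDerivAt (fun t : ℂ => (a i : ℂ) * t) ((a i : ℂ) * 1) (z i) :=
      (hasDerivAt_id (z i)).const_mul _
    have hu : HasDerivAt (fun t : ℂ => 1 - t * w i) (-(w i)) (z i) := by
      simpa using (hasDerivAt_mul_const (w i)).const_sub (1 : ℂ)
    exact hA.mul (hu.inv (ne_aux (h i)))
  have hF1 : HasFDerivAt (fun z' : Fin n → ℂ => (a i : ℂ) * z' i * (1 - z' i * w i)⁻¹)
      ((((a i : ℂ) * 1) * (1 - z i * w i)⁻¹ +
        ((a i : ℂ) * z i) * (-(-(w i)) / (1 - z i * w i) ^ 2)) •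
        (ContinuousLinearMap.proj i : (Fin n → ℂ) →L[ℂ] ℂ)) z :=
    by have := hf1.comp_hasFDerivAt z (hasFDerivAt_apply (𝕜 := ℂ) i z); exact this
  have hG := hF1.mul (hasFDerivAt_Lker a w z h)
  rw [pdz, Filter.EventuallyEq.fderiv_eq hEq,
    HasFDerivAt.fderiv (f := fun z' => (a i : ℂ) * z' i * (1 - z' i * w i)⁻¹ * Lker a z' w) hG]
  simp only [ContinuousLinearMap.add_apply, ContinuousLinearMap.smul_apply,
    ContinuousLinearMap.coe_sum', Finset.sum_apply, ContinuousLinearMap.proj_apply,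
    Pi.single_apply, smul_eq_mul, mul_ite, mul_one, mul_zero, Finset.sum_ite_eq',
    Finset.sum_ite_eq, Finset.mem_univ, if_true]
  field_simp [ne_aux (h i)]
  ring

lemma cpow_neg_two (x : ℂ) : x ^ (-((2 : ℝ) : ℂ)) = (x ^ 2)⁻¹ := by
  rw [show (-((2:ℝ):ℂ)) = -((2:ℕ):ℂ) by norm_num, Complex.cpow_neg, Complex.cpow_natCast]

lemma Lker_update {n : ℕ} (a : Fin n → ℝ) (i : Fin n) (c : ℝ) (z w : Fin n → ℂ)
    (h : (1 - z i * w i) ≠ 0) :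
    Lker (Function.update a i (a i + c)) z w = (1 - z i * w i) ^ (-(c : ℂ)) * Lker a z w := by
  classical
  rw [Lker, Lker, ← Finset.mul_prod_erase _ _ (Finset.mem_univ i),
    ← Finset.mul_prod_erase _ _ (Finset.mem_univ i), Function.update_self]
  have h1 : ∀ j ∈ Finset.univ.erase i,
      (1 - z j * w j) ^ (-(Function.update a i (a i + c) j : ℂ)) =
      (1 - z j * w j) ^ (-(a j : ℂ)) := fun j hj => by
    rw [Function.update_of_ne (Finset.ne_of_mem_erase hj)]
  rw [Finset.prod_congr rfl h1]
  have h2 : (-((a i + c : ℝ) : ℂ)) = (-(c : ℂ)) + (-(a i : ℂ)) := by push_cast; ring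
  rw [h2, Complex.cpow_add _ _ h, mul_assoc]

lemma scal_aux {m : ℕ} (a : Fin (m + 2) → ℝ) (z w : Fin (m + 2) → ℂ)
    (hu : ∀ k, (1 - z k * w k) ≠ 0) (h01 : (0 : Fin (m + 2)) ≠ 1) :
    (∏ j, (1 - z j * w j) ^
        (-(a j : ℂ) - (if j = 0 then 2 else 0) - (if j = 1 then 2 else 0)))
      = ((1 - z 0 * w 0) ^ 2)⁻¹ * (((1 - z 1 * w 1) ^ 2)⁻¹ * Lker a z w) := by
  classical
  have step : ∀ j : Fin (m+2), (1 - z j * w j) ^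
      (-(a j : ℂ) - (if j = 0 then 2 else 0) - (if j = 1 then 2 else 0)) =
      (if j = 0 then ((1 - z j * w j) ^ 2)⁻¹ else 1) *
        ((if j = 1 then ((1 - z j * w j) ^ 2)⁻¹ else 1) * (1 - z j * w j) ^ (-(a j : ℂ))) := by
    intro j
    have cp : ∀ u : ℂ, u ≠ 0 → ∀ b : ℂ, u ^ (-(2:ℂ) + b) = (u ^ 2)⁻¹ * u ^ b := by
      intro u hu0 b
      rw [Complex.cpow_add _ _ hu0, show (-(2:ℂ)) = -((2:ℕ):ℂ) by norm_num,
        Complex.cpow_neg, Complex.cpow_natCast]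
    by_cases hj0 : j = 0 <;> by_cases hj1 : j = 1
    · exact absurd (hj0.symm.trans hj1) h01
    · subst hj0
      rw [if_pos rfl, if_neg hj1, if_pos rfl, if_neg hj1, one_mul,
        show -(a 0 : ℂ) - 2 - 0 = -(2:ℂ) + -(a 0 : ℂ) by ring, cp _ (hu 0)]
    · subst hj1
      rw [if_neg hj0, if_pos rfl, if_neg hj0, if_pos rfl, one_mul,
        show -(a 1 : ℂ) - 0 - 2 = -(2:ℂ) + -(a 1 : ℂ) by ring, cp _ (hu 1)]
    · rw [if_neg hj0, if_neg hj1, if_neg hj0, if_neg hj1, one_mul, one_mul,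
        show -(a j : ℂ) - 0 - 0 = -(a j : ℂ) by ring]
  rw [Finset.prod_congr rfl fun j _ => step j, Finset.prod_mul_distrib,
    Finset.prod_mul_distrib, Finset.prod_ite_eq' Finset.univ (0 : Fin (m+2)),
    Finset.prod_ite_eq' Finset.univ (1 : Fin (m+2)), if_pos (Finset.mem_univ _),
    if_pos (Finset.mem_univ _), Lker]

lemma mat_aux (u0 u1 z0 z1 w0 w1 b d : ℂ) :
    Matrix.diagonal ![u0, u1, 1] *
      !![1, 0, z0; 0, b, b * z1; w0, b * w1, d] *
      Matrix.diagonal ![u0, u1, 1] =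
    !![u0 * u0, 0, u0 * z0;
       0, b * u1 * u1, b * u1 * z1;
       w0 * u0, b * w1 * u1, d] := by
  ext i j
  fin_cases i <;> fin_cases j <;>
    (simp [Matrix.mul_apply, Fin.sum_univ_three, Matrix.diagonal]; try ring) <;> tauto
lemma smul_fin3 (s a b c d e f g h k : ℂ) :
    s • (!![a, b, c; d, e, f; g, h, k] : Matrix (Fin 3) (Fin 3) ℂ) =
      !![s * a, s * b, s * c; s * d, s * e, s * f; s * g, s * h, s * k] := by
  ext i j
  fin_cases i <;> fin_cases j <;> simp

lemma fin3_entries {a b c d e f g h k a' b' c' d' e' f' g' h' k' : ℂ}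
    (h1 : a = a') (h2 : b = b') (h3 : c = c') (h4 : d = d') (h5 : e = e')
    (h6 : f = f') (h7 : g = g') (h8 : h = h') (h9 : k = k') :
    (!![a, b, c; d, e, f; g, h, k] : Matrix (Fin 3) (Fin 3) ℂ) =
      !![a', b', c'; d', e', f'; g', h', k'] := by
  subst h1 h2 h3 h4 h5 h6 h7 h8 h9; rfl

lemma alg22 (A0 A1 b1 b2 u0 u1 L z0 z1 w0 w1 : ℂ) (hA0 : A0 ≠ 0) (hA1 : A1 ≠ 0)
    (hu0 : u0 ≠ 0) (hu1 : u1 ≠ 0) :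
    A0⁻¹ * A0⁻¹ * (A0 * (1 + A0 * z0 * w0) * (u0⁻¹ * u0⁻¹) * ((u1 ^ 2)⁻¹ * L)) +
      b1 ^ 2 * A1⁻¹ * A1⁻¹ * (A1 * (1 + A1 * z1 * w1) * (u1⁻¹ * u1⁻¹) * ((u0 ^ 2)⁻¹ * L)) +
      b2 ^ 2 * ((u1 ^ 2)⁻¹ * ((u0 ^ 2)⁻¹ * L)) =
    (u0 ^ 2)⁻¹ * ((u1 ^ 2)⁻¹ * L) *
      (z0 * w0 + b1 ^ 2 * z1 * w1 + 1 / A0 + b1 ^ 2 / A1 + b2 ^ 2) := by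
  have hD : (A0 * A0 * (u0 * u0 * u1 ^ 2) * (A1 * A1 * (u1 * u1 * u0 ^ 2))) ≠ 0 := by
    apply mul_ne_zero
    · exact mul_ne_zero (mul_ne_zero hA0 hA0)
        (mul_ne_zero (mul_ne_zero hu0 hu0) (pow_ne_zero _ hu1))
    · exact mul_ne_zero (mul_ne_zero hA1 hA1)
        (mul_ne_zero (mul_ne_zero hu1 hu1) (pow_ne_zero _ hu0))
  field_simp
  ring

/-- Closed form of the Type II kernel: the matrix `N(z,w)` built from
`L^{(α+2e₁)}`, `L^{(α+2e₂)}`, `L^{(α+2e₁+2e₂)}` and their partial derivatives equals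
`(∏ⱼ (1 − zⱼwⱼ)^{−αⱼ−2δ_{1j}−2δ_{2j}}) • (D₂(z,w) B(z,w) D₂(z,w))`. -/
theorem statement11 {m : ℕ} (a : Fin (m + 2) → ℝ) (hpos : ∀ j, 0 < a j)
    (β₁ β₂ : ℝ) (hβ₁ : 0 < β₁) (hβ₂ : 0 < β₂)
    (z w : Fin (m + 2) → ℂ)
    (hz : ∀ k, ‖z k‖ < 1) (hw : ∀ k, ‖w k‖ < 1) :
    (!![Lker (Function.update a 1 (a 1 + 2)) z w,
        0,
        ((a 0 : ℂ))⁻¹ * pdw (Lker (Function.update a 1 (a 1 + 2))) 0 z w;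
        0,
        (β₁ : ℂ) ^ 2 * Lker (Function.update a 0 (a 0 + 2)) z w,
        (β₁ : ℂ) ^ 2 * ((a 1 : ℂ))⁻¹ * pdw (Lker (Function.update a 0 (a 0 + 2))) 1 z w;
        ((a 0 : ℂ))⁻¹ * pdz (Lker (Function.update a 1 (a 1 + 2))) 0 z w,
        (β₁ : ℂ) ^ 2 * ((a 1 : ℂ))⁻¹ * pdz (Lker (Function.update a 0 (a 0 + 2))) 1 z w,
        ((a 0 : ℂ))⁻¹ * ((a 0 : ℂ))⁻¹ *
            pdz (pdw (Lker (Function.update a 1 (a 1 + 2))) 0) 0 z w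
          + (β₁ : ℂ) ^ 2 * ((a 1 : ℂ))⁻¹ * ((a 1 : ℂ))⁻¹ *
            pdz (pdw (Lker (Function.update a 0 (a 0 + 2))) 1) 1 z w
          + (β₂ : ℂ) ^ 2 *
            Lker (Function.update (Function.update a 0 (a 0 + 2)) 1 (a 1 + 2)) z w] :
        Matrix (Fin 3) (Fin 3) ℂ) =
      (∏ j, (1 - z j * w j) ^
          (-(a j : ℂ) - (if j = 0 then 2 else 0) - (if j = 1 then 2 else 0))) •
        (Matrix.diagonal ![1 - z 0 * w 0, 1 - z 1 * w 1, 1] *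
          !![1, 0, z 0;
             0, (β₁ : ℂ) ^ 2, (β₁ : ℂ) ^ 2 * z 1;
             w 0, (β₁ : ℂ) ^ 2 * w 1,
               z 0 * w 0 + (β₁ : ℂ) ^ 2 * z 1 * w 1
                 + 1 / (a 0 : ℂ) + (β₁ : ℂ) ^ 2 / (a 1 : ℂ) + (β₂ : ℂ) ^ 2] *
          Matrix.diagonal ![1 - z 0 * w 0, 1 - z 1 * w 1, 1]) := by
  classical
  have habs : ∀ k, ‖z k * w k‖ < 1 := by
    intro k
    rw [norm_mul]
    have h1 := hz k; have h2 := hw k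
    have h3 := norm_nonneg (z k); have h4 := norm_nonneg (w k)
    nlinarith
  have hu : ∀ k, (1 - z k * w k) ≠ 0 := fun k => ne_aux (habs k)
  have h01 : (0 : Fin (m + 2)) ≠ 1 := by
    intro hh
    have := congrArg Fin.val hh
    simp [Fin.val_one] at this
  have ha0 : (a 0 : ℂ) ≠ 0 := Complex.ofReal_ne_zero.2 (ne_of_gt (hpos 0))
  have ha1 : (a 1 : ℂ) ≠ 0 := Complex.ofReal_ne_zero.2 (ne_of_gt (hpos 1))
  have e10 : Function.update a 1 (a 1 + 2) 0 = a 0 := Function.update_of_ne h01 _ _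
  have e01 : Function.update a 0 (a 0 + 2) 1 = a 1 := Function.update_of_ne (Ne.symm h01) _ _
  have hL1 : Lker (Function.update a 1 (a 1 + 2)) z w
      = ((1 - z 1 * w 1) ^ 2)⁻¹ * Lker a z w := by
    rw [Lker_update a 1 2 z w (hu 1), cpow_neg_two]
  have hL2 : Lker (Function.update a 0 (a 0 + 2)) z w
      = ((1 - z 0 * w 0) ^ 2)⁻¹ * Lker a z w := by
    rw [Lker_update a 0 2 z w (hu 0), cpow_neg_two]
  have hL12 : Lker (Function.update (Function.update a 0 (a 0 + 2)) 1 (a 1 + 2)) z w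
      = ((1 - z 1 * w 1) ^ 2)⁻¹ * (((1 - z 0 * w 0) ^ 2)⁻¹ * Lker a z w) := by
    rw [show Function.update (Function.update a 0 (a 0 + 2)) 1 (a 1 + 2)
        = Function.update (Function.update a 0 (a 0 + 2)) 1
            ((Function.update a 0 (a 0 + 2)) 1 + 2) by rw [e01],
      Lker_update _ 1 2 z w (hu 1), cpow_neg_two, hL2]
  have hpw1 : pdw (Lker (Function.update a 1 (a 1 + 2))) 0 z w
      = (a 0 : ℂ) * z 0 * (1 - z 0 * w 0)⁻¹ * Lker (Function.update a 1 (a 1 + 2)) z w := by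
    rw [pdw_Lker _ 0 z w habs, e10]
  have hpz1 : pdz (Lker (Function.update a 1 (a 1 + 2))) 0 z w
      = (a 0 : ℂ) * w 0 * (1 - z 0 * w 0)⁻¹ * Lker (Function.update a 1 (a 1 + 2)) z w := by
    rw [pdz_Lker _ 0 z w habs, e10]
  have hpw2 : pdw (Lker (Function.update a 0 (a 0 + 2))) 1 z w
      = (a 1 : ℂ) * z 1 * (1 - z 1 * w 1)⁻¹ * Lker (Function.update a 0 (a 0 + 2)) z w := by
    rw [pdw_Lker _ 1 z w habs, e01]
  have hpz2 : pdz (Lker (Function.update a 0 (a 0 + 2))) 1 z w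
      = (a 1 : ℂ) * w 1 * (1 - z 1 * w 1)⁻¹ * Lker (Function.update a 0 (a 0 + 2)) z w := by
    rw [pdz_Lker _ 1 z w habs, e01]
  have hdd1 : pdz (pdw (Lker (Function.update a 1 (a 1 + 2))) 0) 0 z w
      = (a 0 : ℂ) * (1 + (a 0 : ℂ) * z 0 * w 0) * ((1 - z 0 * w 0)⁻¹ * (1 - z 0 * w 0)⁻¹) *
        Lker (Function.update a 1 (a 1 + 2)) z w := by
    rw [pdz_pdw_Lker _ 0 z w habs, e10]
  have hdd2 : pdz (pdw (Lker (Function.update a 0 (a 0 + 2))) 1) 1 z w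
      = (a 1 : ℂ) * (1 + (a 1 : ℂ) * z 1 * w 1) * ((1 - z 1 * w 1)⁻¹ * (1 - z 1 * w 1)⁻¹) *
        Lker (Function.update a 0 (a 0 + 2)) z w := by
    rw [pdz_pdw_Lker _ 1 z w habs, e01]
  have hscal := scal_aux a z w hu h01
  rw [mat_aux, hscal, smul_fin3]
  simp only [hpw1, hpz1, hpw2, hpz2, hdd1, hdd2, hL1, hL2, hL12]
  refine fin3_entries ?_ ?_ ?_ ?_ ?_ ?_ ?_ ?_ ?_ <;>
    first
      | (rw [mul_zero])
      | (exact alg22 _ _ _ _ _ _ _ _ _ _ _ ha0 ha1 (hu 0) (hu 1))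
      | (field_simp [hu 0, hu 1, ha0, ha1])
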